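/- In the spanner gadget graph H, for all 0 ≤ i, j ≤ k−1 with i ≠ j one has d_H(ℓ_i, r_j) = α + β + 1, and for all 0 ≤ i ≤ k−1 one has d_H(ℓ_i, r_i) = 2(α + β) + 1. -/

import Mathlib

/-!
Statement 17: In the spanner gadget graph `H` (with integers `α ≥ 1`,
`β ≥ 0` such that `P = α + β` is even and positive), for all
`0 ≤ i, j ≤ k−1` with `i ≠ j` one has `d_H(ℓ_i, r_j) = α + β + 1`, and for
all `0 ≤ i ≤ k−1` one has `d_H(ℓ_i, r_i) = 2(α + β) + 1`.
-/

/-- Generic graph built from "hub" vertices and "segments": each segment `s`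
is a path with `len s` edges between the two hubs `ends s`, whose
`len s - 1` internal vertices are the pairs `⟨s, t⟩`.  A segment of length 1
is just an edge between its two endpoints. -/
def segGraph {Hub Seg : Type} (ends : Seg → Hub × Hub) (len : Seg → ℕ) :
    SimpleGraph (Hub ⊕ (s : Seg) × Fin (len s - 1)) :=
  SimpleGraph.fromRel fun u v =>
    match u, v with
    | Sum.inl x, Sum.inl y => ∃ s, len s = 1 ∧ ends s = (x, y)
    | Sum.inl x, Sum.inr ⟨s, t⟩ =>
        ((ends s).1 = x ∧ (t : ℕ) = 0) ∨ ((ends s).2 = x ∧ (t : ℕ) + 2 = len s)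
    | Sum.inr ⟨s, t⟩, Sum.inl x =>
        ((ends s).1 = x ∧ (t : ℕ) = 0) ∨ ((ends s).2 = x ∧ (t : ℕ) + 2 = len s)
    | Sum.inr ⟨s, t⟩, Sum.inr ⟨s', t'⟩ =>
        s = s' ∧ ((t : ℕ) + 1 = (t' : ℕ) ∨ (t' : ℕ) + 1 = (t : ℕ))

section SegGraphAux

open SimpleGraph

/-- The relation underlying `segGraph`. -/
def segRel {Hub Seg : Type} (ends : Seg → Hub × Hub) (len : Seg → ℕ)
    (u v : Hub ⊕ (s : Seg) × Fin (len s - 1)) : Prop :=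
  match u, v with
  | Sum.inl x, Sum.inl y => ∃ s, len s = 1 ∧ ends s = (x, y)
  | Sum.inl x, Sum.inr ⟨s, t⟩ =>
      ((ends s).1 = x ∧ (t : ℕ) = 0) ∨ ((ends s).2 = x ∧ (t : ℕ) + 2 = len s)
  | Sum.inr ⟨s, t⟩, Sum.inl x =>
      ((ends s).1 = x ∧ (t : ℕ) = 0) ∨ ((ends s).2 = x ∧ (t : ℕ) + 2 = len s)
  | Sum.inr ⟨s, t⟩, Sum.inr ⟨s', t'⟩ =>
      s = s' ∧ ((t : ℕ) + 1 = (t' : ℕ) ∨ (t' : ℕ) + 1 = (t : ℕ))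

lemma segGraph_eq {Hub Seg : Type} (ends : Seg → Hub × Hub) (len : Seg → ℕ) :
    segGraph ends len = SimpleGraph.fromRel (segRel ends len) := rfl

lemma segGraph_adj {Hub Seg : Type} (ends : Seg → Hub × Hub) (len : Seg → ℕ)
    (u v : Hub ⊕ (s : Seg) × Fin (len s - 1)) :
    (segGraph ends len).Adj u v ↔ u ≠ v ∧ (segRel ends len u v ∨ segRel ends len v u) := by
  rw [segGraph_eq, SimpleGraph.fromRel_adj]

/-- Along any walk, a 1-Lipschitz potential changes by at most the length. -/
lemma walk_pot_bound {V : Type*} {G : SimpleGraph V} (f : V → ℕ)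
    (h : ∀ u v, G.Adj u v → f v ≤ f u + 1) {u v : V} (p : G.Walk u v) :
    f v ≤ f u + p.length := by
  induction p with
  | nil => simp
  | cons hadj q ih =>
      have := h _ _ hadj
      simp only [SimpleGraph.Walk.length_cons]
      omega

/-- Interpolated potential on a `segGraph` from hub values. -/
def segPot {Hub Seg : Type} (ends : Seg → Hub × Hub) (len : Seg → ℕ) (φ : Hub → ℕ) :
    (Hub ⊕ (s : Seg) × Fin (len s - 1)) → ℕ
  | Sum.inl x => φ x
  | Sum.inr ⟨s, t⟩ =>
      min (φ (ends s).1 + ((t : ℕ) + 1)) (φ (ends s).2 + (len s - 1 - (t : ℕ)))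

lemma segPot_lipschitz {Hub Seg : Type} (ends : Seg → Hub × Hub) (len : Seg → ℕ)
    (φ : Hub → ℕ)
    (hφ : ∀ s, φ (ends s).1 ≤ φ (ends s).2 + len s ∧ φ (ends s).2 ≤ φ (ends s).1 + len s) :
    ∀ u v, (segGraph ends len).Adj u v →
      segPot ends len φ v ≤ segPot ends len φ u + 1 := by
  have key : ∀ u v, segRel ends len u v →
      segPot ends len φ v ≤ segPot ends len φ u + 1 ∧
      segPot ends len φ u ≤ segPot ends len φ v + 1 := by
    rintro (x | ⟨s, t⟩) (y | ⟨s', t'⟩) h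
    · obtain ⟨s, h1, h2⟩ := h
      have := hφ s
      rw [h2] at this
      simp only [Prod.fst, Prod.snd] at this
      simp only [segPot]
      omega
    · have ht := t'.isLt
      have := hφ s'
      simp only [segPot]
      rcases h with ⟨rfl, h0⟩ | ⟨rfl, h2⟩ <;> omega
    · have ht := t.isLt
      have := hφ s
      simp only [segPot]
      rcases h with ⟨rfl, h0⟩ | ⟨rfl, h2⟩ <;> omega
    · obtain ⟨rfl, h⟩ := h
      have ht := t.isLt
      have ht' := t'.isLt
      have := hφ s
      simp only [segPot]
      omega
  intro u v h
  rw [segGraph_adj] at h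
  rcases h.2 with h | h
  · exact (key u v h).1
  · exact (key v u h).2

lemma segPot_dist_le {Hub Seg : Type} (ends : Seg → Hub × Hub) (len : Seg → ℕ)
    (φ : Hub → ℕ)
    (hφ : ∀ s, φ (ends s).1 ≤ φ (ends s).2 + len s ∧ φ (ends s).2 ≤ φ (ends s).1 + len s)
    {x y : Hub} (hr : (segGraph ends len).Reachable (Sum.inl x) (Sum.inl y)) :
    φ y ≤ φ x + (segGraph ends len).dist (Sum.inl x) (Sum.inl y) := by
  obtain ⟨p, hp⟩ := hr.exists_walk_length_eq_dist
  have := walk_pot_bound (segPot ends len φ) (segPot_lipschitz ends len φ hφ) p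
  rw [hp] at this
  simpa [segPot] using this

/-- A walk of length `len s` through a segment. -/
lemma segWalk {Hub Seg : Type} (ends : Seg → Hub × Hub) (len : Seg → ℕ) (s : Seg)
    (h1 : 1 ≤ len s) (hne : (ends s).1 ≠ (ends s).2) :
    ∃ p : (segGraph ends len).Walk (Sum.inl (ends s).1) (Sum.inl (ends s).2),
      p.length = len s := by
  rcases eq_or_lt_of_le h1 with h1 | h2
  · have adj : (segGraph ends len).Adj (Sum.inl (ends s).1) (Sum.inl (ends s).2) := by
      rw [segGraph_adj]
      exact ⟨by simpa using hne, Or.inl ⟨s, h1.symm, rfl⟩⟩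
    exact ⟨SimpleGraph.Walk.cons adj SimpleGraph.Walk.nil, by simp [h1]⟩
  · have aux : ∀ d (t : Fin (len s - 1)), (t : ℕ) + 2 + d = len s →
        ∃ p : (segGraph ends len).Walk (Sum.inr ⟨s, t⟩) (Sum.inl (ends s).2),
          p.length = d + 1 := by
      intro d
      induction d with
      | zero =>
          intro t ht
          have adj : (segGraph ends len).Adj (Sum.inr ⟨s, t⟩) (Sum.inl (ends s).2) := by
            rw [segGraph_adj]
            exact ⟨by simp, Or.inl (Or.inr ⟨rfl, by omega⟩)⟩
          exact ⟨SimpleGraph.Walk.cons adj SimpleGraph.Walk.nil, by simp⟩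
      | succ d ih =>
          intro t ht
          have htlt : (t : ℕ) + 1 < len s - 1 := by omega
          obtain ⟨p, hp⟩ := ih ⟨(t : ℕ) + 1, htlt⟩ (by simp; omega)
          have adj : (segGraph ends len).Adj (Sum.inr ⟨s, t⟩)
              (Sum.inr ⟨s, ⟨(t : ℕ) + 1, htlt⟩⟩) := by
            rw [segGraph_adj]
            refine ⟨?_, Or.inl ⟨rfl, Or.inl rfl⟩⟩
            simp only [ne_eq, Sum.inr.injEq, Sigma.mk.inj_iff, heq_eq_eq, true_and]
            intro hc
            rw [Fin.ext_iff] at hc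
            simp at hc
          exact ⟨SimpleGraph.Walk.cons adj p, by simp [hp]⟩
    have ht0 : 0 < len s - 1 := by omega
    have adj0 : (segGraph ends len).Adj (Sum.inl (ends s).1) (Sum.inr ⟨s, ⟨0, ht0⟩⟩) := by
      rw [segGraph_adj]
      exact ⟨by simp, Or.inl (Or.inl ⟨rfl, rfl⟩)⟩
    obtain ⟨p, hp⟩ := aux (len s - 2) ⟨0, ht0⟩ (by simp; omega)
    exact ⟨SimpleGraph.Walk.cons adj0 p, by simp [hp]; omega⟩

end SegGraphAux

namespace SpannerGadget

/-- Hub vertices of the spanner gadget `H`. -/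
inductive Hub (m : ℕ) : Type
  | L : Fin (2 ^ m) → Hub m
  | R : Fin (2 ^ m) → Hub m
  | lk1 : Hub m
  | rk1 : Hub m
  | lk2 : Hub m
  | rk2 : Hub m
  | F : Fin m → Hub m
  | T : Fin m → Hub m
  | F' : Fin m → Hub m
  | T' : Fin m → Hub m

/-- Segments (paths between hubs) of the spanner gadget `H`,
with `P = α + β`. -/
inductive Seg (m : ℕ) : Type
  | Lbit : Fin (2 ^ m) → Fin m → Seg m   -- ℓ_i – (f_j or t_j), length P/2
  | Rbit : Fin (2 ^ m) → Fin m → Seg m   -- r_i – (f'_j or t'_j), length P/2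
  | FT' : Fin m → Seg m                  -- edge f_j – t'_j
  | TF' : Fin m → Seg m                  -- edge t_j – f'_j
  | Llk1 : Fin (2 ^ m) → Seg m           -- ℓ_i – ℓ_{k+1}, length P
  | Rrk1 : Fin (2 ^ m) → Seg m           -- r_i – r_{k+1}, length P
  | Llk2 : Fin (2 ^ m) → Seg m           -- ℓ_i – ℓ_{k+2}, length P/2
  | Rrk2 : Fin (2 ^ m) → Seg m           -- r_i – r_{k+2}, length P/2
  | lk1rk1 : Seg m                       -- edge ℓ_{k+1} – r_{k+1}

open Hub Seg

/-- Endpoints of each segment. -/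
def ends (m : ℕ) : Seg m → Hub m × Hub m
  | Lbit i j => (L i, if Nat.testBit i.val j.val then T j else F j)
  | Rbit i j => (R i, if Nat.testBit i.val j.val then T' j else F' j)
  | FT' j => (F j, T' j)
  | TF' j => (T j, F' j)
  | Llk1 i => (L i, lk1)
  | Rrk1 i => (R i, rk1)
  | Llk2 i => (L i, lk2)
  | Rrk2 i => (R i, rk2)
  | lk1rk1 => (lk1, rk1)

/-- Length of each segment, where `α` and `β` are the spanner parameters and
`P = α + β`. -/
def len (m α β : ℕ) : Seg m → ℕ
  | FT' _ => 1
  | TF' _ => 1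
  | lk1rk1 => 1
  | Llk1 _ => α + β
  | Rrk1 _ => α + β
  | _ => (α + β) / 2

/-- Vertices of the spanner gadget `H` (and of `G(S_a,S_b)`). -/
abbrev V (m α β : ℕ) : Type := Hub m ⊕ (s : Seg m) × Fin (len m α β s - 1)

/-- The spanner gadget `H`. -/
def H (m α β : ℕ) : SimpleGraph (V m α β) := segGraph (ends m) (len m α β)

/-- Extra edges depending on the input strings: an edge `ℓ_i–ℓ_{k+1}` for each
`i` with `S_a(i) = 1` and an edge `r_i–r_{k+1}` for each `i` with `S_b(i) = 1`. -/
def extraRel (m α β : ℕ) (Sa Sb : Fin (2 ^ m) → Bool) : V m α β → V m α β → Prop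
  | Sum.inl (L i), Sum.inl lk1 => Sa i = true
  | Sum.inl (R i), Sum.inl rk1 => Sb i = true
  | _, _ => False

/-- The graph `G(S_a, S_b)`: the gadget `H` together with the input edges. -/
def G (m α β : ℕ) (Sa Sb : Fin (2 ^ m) → Bool) : SimpleGraph (V m α β) :=
  H m α β ⊔ SimpleGraph.fromRel (extraRel m α β Sa Sb)

/-- Potential for the lower bound `d(ℓ_i, r_j) ≥ (α+β) + 1`. -/
def pot1 (m Q : ℕ) : Hub m → ℕ
  | Hub.L _ => 0
  | Hub.R _ => 2 * Q + 1
  | Hub.lk1 => 2 * Q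
  | Hub.rk1 => 2 * Q + 1
  | Hub.lk2 => Q
  | Hub.rk2 => Q + 1
  | Hub.F _ => Q
  | Hub.T _ => Q
  | Hub.F' _ => Q + 1
  | Hub.T' _ => Q + 1

/-- Potential for the lower bound `d(ℓ_i, r_i) ≥ 2(α+β) + 1`. -/
def pot2 (m Q : ℕ) (i : Fin (2 ^ m)) : Hub m → ℕ
  | Hub.L i' => if i' = i then 0 else 2 * Q
  | Hub.R i' => if i' = i then 4 * Q + 1 else 2 * Q + 1
  | Hub.lk1 => 2 * Q
  | Hub.rk1 => 2 * Q + 1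
  | Hub.lk2 => Q
  | Hub.rk2 => 3 * Q + 1
  | Hub.F b => if (i : ℕ).testBit b then 3 * Q else Q
  | Hub.T b => if (i : ℕ).testBit b then Q else 3 * Q
  | Hub.F' b => if (i : ℕ).testBit b then Q + 1 else 3 * Q + 1
  | Hub.T' b => if (i : ℕ).testBit b then 3 * Q + 1 else Q + 1

lemma pot1_spec (m α β Q : ℕ) (hQ : Q + Q = α + β) :
    ∀ s : Seg m, pot1 m Q (ends m s).1 ≤ pot1 m Q (ends m s).2 + len m α β s ∧
      pot1 m Q (ends m s).2 ≤ pot1 m Q (ends m s).1 + len m α β s := by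
  intro s
  cases s <;>
    simp only [ends, len, pot1] <;>
    (try split_ifs) <;>
    (try simp only [pot1]) <;>
    omega

lemma pot2_spec (m α β Q : ℕ) (i : Fin (2 ^ m)) (hQ : Q + Q = α + β) :
    ∀ s : Seg m, pot2 m Q i (ends m s).1 ≤ pot2 m Q i (ends m s).2 + len m α β s ∧
      pot2 m Q i (ends m s).2 ≤ pot2 m Q i (ends m s).1 + len m α β s := by
  intro s
  cases s <;>
    simp only [ends, len, pot2] <;>
    (try split_ifs) <;>
    (try simp only [pot2]) <;>
    (try split_ifs) <;>
    (try simp_all) <;>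
    omega

lemma hub_walk (m α β : ℕ) (s : Seg m) (a b : Hub m) (hab : ends m s = (a, b))
    (h1 : 1 ≤ len m α β s) (hne : a ≠ b) :
    ∃ p : (H m α β).Walk (Sum.inl a) (Sum.inl b), p.length = len m α β s := by
  obtain ⟨p, hp⟩ := segWalk (ends m) (len m α β) s h1 (by rw [hab]; simpa using hne)
  exact ⟨p.copy (by rw [hab]) (by rw [hab]), (p.length_copy _ _).trans hp⟩

theorem statement17 (m α β : ℕ) (hm : 1 ≤ m) (hα : 1 ≤ α)
    (heven : Even (α + β)) (hpos : 0 < α + β) :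
    (∀ i j : Fin (2 ^ m), i ≠ j →
      (H m α β).dist (Sum.inl (L i)) (Sum.inl (R j)) = α + β + 1) ∧
    (∀ i : Fin (2 ^ m),
      (H m α β).dist (Sum.inl (L i)) (Sum.inl (R i)) = 2 * (α + β) + 1) := by
  obtain ⟨c, hc⟩ := heven
  have hQ : (α + β) / 2 + (α + β) / 2 = α + β := by omega
  set Q := (α + β) / 2 with hQdef
  have hQ1 : 1 ≤ Q := by omega
  have hHeq : segGraph (ends m) (len m α β) = H m α β := rfl
  have lenLbit : ∀ (i : Fin (2 ^ m)) (b : Fin m), len m α β (Seg.Lbit i b) = Q := fun _ _ => rfl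
  have lenRbit : ∀ (i : Fin (2 ^ m)) (b : Fin m), len m α β (Seg.Rbit i b) = Q := fun _ _ => rfl
  constructor
  · intro i j hij
    have hex : ∃ b, (i : ℕ).testBit b ≠ (j : ℕ).testBit b := by
      by_contra h
      push_neg at h
      exact hij (Fin.ext (Nat.eq_of_testBit_eq h))
    obtain ⟨b, hb⟩ := hex
    have hbm : b < m := by
      by_contra h
      push_neg at h
      have h2 : (2 : ℕ) ^ m ≤ 2 ^ b := Nat.pow_le_pow_right (by norm_num) h
      rw [Nat.testBit_eq_false_of_lt (lt_of_lt_of_le i.isLt h2),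
        Nat.testBit_eq_false_of_lt (lt_of_lt_of_le j.isLt h2)] at hb
      exact hb rfl
    have hupper : ∃ p : (H m α β).Walk (Sum.inl (L i)) (Sum.inl (R j)),
        p.length = α + β + 1 := by
      cases hib : (i : ℕ).testBit b with
      | false =>
          have hjb : (j : ℕ).testBit b = true := by
            cases hjb : (j : ℕ).testBit b
            · rw [hib, hjb] at hb; exact absurd rfl hb
            · rfl
          obtain ⟨p, hp⟩ := hub_walk m α β (Seg.Lbit i ⟨b, hbm⟩) (L i) (Hub.F ⟨b, hbm⟩)
            (by simp [ends, hib]) (by rw [lenLbit]; omega) (by simp)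
          obtain ⟨q, hq⟩ := hub_walk m α β (Seg.FT' ⟨b, hbm⟩) (Hub.F ⟨b, hbm⟩)
            (Hub.T' ⟨b, hbm⟩) rfl (by exact le_refl 1) (by simp)
          obtain ⟨r, hr⟩ := hub_walk m α β (Seg.Rbit j ⟨b, hbm⟩) (R j) (Hub.T' ⟨b, hbm⟩)
            (by simp [ends, hjb]) (by rw [lenRbit]; omega) (by simp)
          refine ⟨p.append (q.append r.reverse), ?_⟩
          rw [SimpleGraph.Walk.length_append, SimpleGraph.Walk.length_append,
            SimpleGraph.Walk.length_reverse, hp, hq, hr, lenLbit, lenRbit,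
            show len m α β (Seg.FT' ⟨b, hbm⟩) = 1 from rfl]
          omega
      | true =>
          have hjb : (j : ℕ).testBit b = false := by
            cases hjb : (j : ℕ).testBit b
            · rfl
            · rw [hib, hjb] at hb; exact absurd rfl hb
          obtain ⟨p, hp⟩ := hub_walk m α β (Seg.Lbit i ⟨b, hbm⟩) (L i) (Hub.T ⟨b, hbm⟩)
            (by simp [ends, hib]) (by rw [lenLbit]; omega) (by simp)
          obtain ⟨q, hq⟩ := hub_walk m α β (Seg.TF' ⟨b, hbm⟩) (Hub.T ⟨b, hbm⟩)
            (Hub.F' ⟨b, hbm⟩) rfl (by exact le_refl 1) (by simp)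
          obtain ⟨r, hr⟩ := hub_walk m α β (Seg.Rbit j ⟨b, hbm⟩) (R j) (Hub.F' ⟨b, hbm⟩)
            (by simp [ends, hjb]) (by rw [lenRbit]; omega) (by simp)
          refine ⟨p.append (q.append r.reverse), ?_⟩
          rw [SimpleGraph.Walk.length_append, SimpleGraph.Walk.length_append,
            SimpleGraph.Walk.length_reverse, hp, hq, hr, lenLbit, lenRbit,
            show len m α β (Seg.TF' ⟨b, hbm⟩) = 1 from rfl]
          omega
    obtain ⟨p, hp⟩ := hupper
    have hub : (H m α β).dist (Sum.inl (L i)) (Sum.inl (R j)) ≤ α + β + 1 :=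
      hp ▸ SimpleGraph.dist_le p
    have hlow := segPot_dist_le (ends m) (len m α β) (pot1 m Q) (pot1_spec m α β Q hQ)
      ⟨p⟩
    rw [hHeq] at hlow
    simp only [pot1] at hlow
    omega
  · intro i
    obtain ⟨p, hp⟩ := hub_walk m α β (Seg.Llk1 i) (L i) Hub.lk1 rfl
      (by show 1 ≤ α + β; omega) (by simp)
    obtain ⟨q, hq⟩ := hub_walk m α β Seg.lk1rk1 Hub.lk1 Hub.rk1 rfl
      (by exact le_refl 1) (by simp)
    obtain ⟨r, hr⟩ := hub_walk m α β (Seg.Rrk1 i) (R i) Hub.rk1 rfl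
      (by show 1 ≤ α + β; omega) (by simp)
    have hub : (H m α β).dist (Sum.inl (L i)) (Sum.inl (R i)) ≤ 2 * (α + β) + 1 := by
      have := SimpleGraph.dist_le (p.append (q.append r.reverse))
      rw [SimpleGraph.Walk.length_append, SimpleGraph.Walk.length_append,
        SimpleGraph.Walk.length_reverse, hp, hq, hr,
        show len m α β (Seg.Llk1 i) = α + β from rfl,
        show len m α β (Seg.Rrk1 i) = α + β from rfl,
        show len m α β Seg.lk1rk1 = 1 from rfl] at this
      omega
    have hlow := segPot_dist_le (ends m) (len m α β) (pot2 m Q i) (pot2_spec m α β Q i hQ)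
      ⟨p.append (q.append r.reverse)⟩
    rw [hHeq] at hlow
    simp [pot2] at hlow
    omega

end SpannerGadget
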